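/- Let Y be a finite nonempty type, let π_ref be a probability mass function on Y, let β > 0, and let D : Y → ℝ satisfy 0 ≤ D(y) ≤ 1 for all y. For each C ≥ 0 let π*_C be the Gibbs policy with reward r_C(y) = C·(1 − D(y)). Let m = min{ D(y) : y ∈ Y, π_ref(y) > 0 } and let S = { y ∈ Y : π_ref(y) > 0 and D(y) = m }. Then the total mass Σ_{y ∈ S} π*_C(y) tends to 1 as C → ∞. -/
import Mathlib


open scoped Classical
open Filter

/-- **Optimality of Evasion (concentration on the minimal-score set).**
For a pmf `πref` on a finite nonempty `Y`, `β > 0`, a detector `D : Y → [0,1]`,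
and the Gibbs policy `πstarC C` with reward `r_C y = C · (1 − D y)`, let `m` be the
minimum of `D` over the support of `πref` and `S = {y | πref y > 0 ∧ D y = m}`.
Then `∑_{y ∈ S} πstarC C y → 1` as `C → ∞`. -/
theorem gibbs_evasion_policy_concentrates_on_min_detector_score
    {Y : Type*} [Fintype Y] [Nonempty Y]
    (πref : Y → ℝ) (href_nonneg : ∀ y, 0 ≤ πref y) (href_sum : ∑ y, πref y = 1)
    (β : ℝ) (hβ : 0 < β)
    (D : Y → ℝ) (hD : ∀ y, 0 ≤ D y ∧ D y ≤ 1)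
    (πstarC : ℝ → Y → ℝ)
    (hπstarC : ∀ C y, πstarC C y =
      πref y * Real.exp (C * (1 - D y) / β) /
        (∑ y', πref y' * Real.exp (C * (1 - D y') / β)))
    (m : ℝ) (hm_mem : ∃ y, 0 < πref y ∧ D y = m)
    (hm_min : ∀ y, 0 < πref y → m ≤ D y) :
    Tendsto (fun C : ℝ =>
        ∑ y ∈ Finset.univ.filter (fun y => 0 < πref y ∧ D y = m), πstarC C y)
      atTop (nhds 1) := by
  classical
  set S := Finset.univ.filter (fun y => 0 < πref y ∧ D y = m) with hS
  set A : ℝ := ∑ y ∈ S, πref y with hA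
  obtain ⟨y0, hy0pos, hy0m⟩ := hm_mem
  have hy0S : y0 ∈ S := by simp [hS, hy0pos, hy0m]
  have hApos : 0 < A :=
    Finset.sum_pos' (fun y _ => href_nonneg y) ⟨y0, hy0S, hy0pos⟩
  set G : ℝ → ℝ := fun C => ∑ y, πref y * Real.exp (C * (m - D y) / β) with hGdef
  have hGtend : Tendsto G atTop (nhds A) := by
    have hAeq : A = ∑ y : Y, (if 0 < πref y ∧ D y = m then πref y else 0) := by
      rw [hA, hS, Finset.sum_filter]
    rw [hAeq]
    apply tendsto_finset_sum
    intro y _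
    by_cases hy : 0 < πref y ∧ D y = m
    · simp only [hy, if_true, hy.2, sub_self, mul_zero, zero_div, Real.exp_zero, mul_one]
      exact tendsto_const_nhds
    · simp only [hy, if_false]
      rcases lt_or_eq_of_le (href_nonneg y) with hpos | hzero
      · have hne : D y ≠ m := fun h => hy ⟨hpos, h⟩
        have hlt : m < D y := lt_of_le_of_ne (hm_min y hpos) (Ne.symm hne)
        have hneg : (m - D y) / β < 0 := div_neg_of_neg_of_pos (by linarith) hβ
        have h1 : Tendsto (fun C : ℝ => C * ((m - D y) / β)) atTop atBot :=
          tendsto_id.atTop_mul_const_of_neg hneg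
        have h2 : Tendsto (fun C : ℝ => Real.exp (C * ((m - D y) / β))) atTop (nhds 0) :=
          Real.tendsto_exp_atBot.comp h1
        simpa [mul_div_assoc] using h2.const_mul (πref y)
      · simp [← hzero]
  have hZpos : ∀ C : ℝ, 0 < ∑ y', πref y' * Real.exp (C * (1 - D y') / β) := by
    intro C
    refine Finset.sum_pos' (fun y _ => mul_nonneg (href_nonneg y) (Real.exp_pos _).le)
      ⟨y0, Finset.mem_univ y0, mul_pos hy0pos (Real.exp_pos _)⟩
  have key : ∀ C : ℝ, (∑ y ∈ S, πstarC C y) = A / G C := by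
    intro C
    have hGZ : G C = (∑ y', πref y' * Real.exp (C * (1 - D y') / β)) *
        Real.exp (-(C * (1 - m) / β)) := by
      rw [hGdef, Finset.sum_mul]
      apply Finset.sum_congr rfl
      intro y _
      rw [mul_assoc, ← Real.exp_add]
      ring_nf
    have hnum : (∑ y ∈ S, πstarC C y) =
        A * Real.exp (C * (1 - m) / β) / (∑ y', πref y' * Real.exp (C * (1 - D y') / β)) := by
      rw [hA, Finset.sum_mul, Finset.sum_div]
      apply Finset.sum_congr rfl
      intro y hy
      have hym : D y = m := (Finset.mem_filter.mp hy).2.2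
      rw [hπstarC, hym]
    rw [hnum, hGZ, Real.exp_neg]
    have hZne := (hZpos C).ne'
    have hexne := (Real.exp_pos (C * (1 - m) / β)).ne'
    field_simp
  have : Tendsto (fun C : ℝ => A / G C) atTop (nhds (A / A)) :=
    tendsto_const_nhds.div hGtend hApos.ne'
  rw [div_self hApos.ne'] at this
  exact this.congr (fun C => (key C).symm)
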